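/- Let a ≠ b and c ≠ d be real numbers. Then G_{a,b}(x,y) = G_{c,d}(x,y) for all positive reals x, y if and only if either a+b = c+d = 0 (in which case both means are the geometric mean) or {a,b} = {c,d}. -/

import Mathlib

noncomputable def gini (p q x y : ℝ) : ℝ := ((x ^ p + y ^ p) / (x ^ q + y ^ q)) ^ (1 / (p - q))

-- ===== backward direction lemmas =====

lemma gini_symm (p q x y : ℝ) (hx : 0 < x) (hy : 0 < y) : gini p q x y = gini q p x y := by
  have hA : (0:ℝ) < x ^ p + y ^ p := by positivity
  have hB : (0:ℝ) < x ^ q + y ^ q := by positivity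
  unfold gini
  have h1 : (x ^ q + y ^ q) / (x ^ p + y ^ p) = ((x ^ p + y ^ p) / (x ^ q + y ^ q))⁻¹ := by
    field_simp
  rw [h1, Real.inv_rpow (by positivity), ← Real.rpow_neg (by positivity)]
  congr 1
  rw [one_div, one_div, ← inv_neg, neg_sub]

lemma gini_geom (p x y : ℝ) (hp : p ≠ 0) (hx : 0 < x) (hy : 0 < y) :
    gini p (-p) x y = (x*y) ^ ((1:ℝ)/2) := by
  have hX : (0:ℝ) < x ^ p := Real.rpow_pos_of_pos hx p
  have hY : (0:ℝ) < y ^ p := Real.rpow_pos_of_pos hy p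
  unfold gini
  rw [Real.rpow_neg hx.le, Real.rpow_neg hy.le]
  have h1 : (x ^ p + y ^ p) / ((x ^ p)⁻¹ + (y ^ p)⁻¹) = x ^ p * y ^ p := by
    field_simp
    ring
  rw [h1, ← Real.mul_rpow hx.le hy.le, ← Real.rpow_mul (by positivity : (0:ℝ) ≤ x*y)]
  congr 1
  field_simp
  norm_num

-- ===== derivative machinery =====

noncomputable def H0 (p t : ℝ) : ℝ := Real.log (Real.exp (p*t) + 1)
noncomputable def H1 (p t : ℝ) : ℝ := p * Real.exp (p*t) / (Real.exp (p*t) + 1)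
noncomputable def H2 (p t : ℝ) : ℝ := p^2 * Real.exp (p*t) / (Real.exp (p*t) + 1)^2
noncomputable def H3 (p t : ℝ) : ℝ := p^3 * (Real.exp (p*t) * (1 - Real.exp (p*t))) / (Real.exp (p*t) + 1)^3
noncomputable def H4 (p t : ℝ) : ℝ := p^4 * (Real.exp (p*t) * (1 - 4*Real.exp (p*t) + Real.exp (p*t)^2)) / (Real.exp (p*t) + 1)^4

lemma Epos (p t : ℝ) : (0:ℝ) < Real.exp (p*t) + 1 := by positivity

lemma hde (p t : ℝ) : HasDerivAt (fun t => Real.exp (p*t)) (p * Real.exp (p*t)) t := by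
  simpa [mul_comm] using ((hasDerivAt_id t).const_mul p).exp

lemma hde1 (p t : ℝ) : HasDerivAt (fun t => Real.exp (p*t) + 1) (p * Real.exp (p*t)) t :=
  (hde p t).add_const 1

lemma hd0 (p t : ℝ) : HasDerivAt (H0 p) (H1 p t) t := by
  have := (hde1 p t).log (Epos p t).ne'
  exact this

lemma hd1 (p t : ℝ) : HasDerivAt (H1 p) (H2 p t) t := by
  have h := ((hde p t).const_mul p).div (hde1 p t) (Epos p t).ne'
  replace h : HasDerivAt (H1 p) _ t := h
  convert h using 1
  have := (Epos p t).ne'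
  simp only [H2, Pi.pow_apply]
  field_simp [H2]
  ring

lemma hd2 (p t : ℝ) : HasDerivAt (H2 p) (H3 p t) t := by
  have h := ((hde p t).const_mul (p^2)).div ((hde1 p t).pow 2) (by positivity : ((Real.exp (p*t) + 1)^2 : ℝ) ≠ 0)
  replace h : HasDerivAt (H2 p) _ t := h
  convert h using 1
  have := (Epos p t).ne'
  simp only [H3, Pi.pow_apply]
  field_simp [H3]
  ring

lemma hd3 (p t : ℝ) : HasDerivAt (H3 p) (H4 p t) t := by
  have hnum : HasDerivAt (fun t => p^3 * (Real.exp (p*t) * (1 - Real.exp (p*t))))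
      (p^3 * ((p * Real.exp (p*t)) * (1 - Real.exp (p*t)) + Real.exp (p*t) * (-(p * Real.exp (p*t))))) t :=
    ((hde p t).mul ((hde p t).const_sub 1)).const_mul (p^3)
  have h := hnum.div ((hde1 p t).pow 3) (by positivity : ((Real.exp (p*t) + 1)^3 : ℝ) ≠ 0)
  replace h : HasDerivAt (H3 p) _ t := h
  convert h using 1
  have := (Epos p t).ne'
  simp only [H4, Pi.pow_apply]
  field_simp [H4]
  ring

noncomputable def LL (k : ℕ) (a b : ℝ) : ℝ → ℝ :=
  fun t => ((match k with | 0 => H0 | 1 => H1 | 2 => H2 | 3 => H3 | _ => H4) a t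
          - (match k with | 0 => H0 | 1 => H1 | 2 => H2 | 3 => H3 | _ => H4) b t) / (a-b)

lemma derivLL0 (a b : ℝ) : deriv (LL 0 a b) = LL 1 a b :=
  funext fun t => (((hd0 a t).sub (hd0 b t)).div_const _).deriv
lemma derivLL1 (a b : ℝ) : deriv (LL 1 a b) = LL 2 a b :=
  funext fun t => (((hd1 a t).sub (hd1 b t)).div_const _).deriv
lemma derivLL2 (a b : ℝ) : deriv (LL 2 a b) = LL 3 a b :=
  funext fun t => (((hd2 a t).sub (hd2 b t)).div_const _).deriv
lemma derivLL3 (a b : ℝ) : deriv (LL 3 a b) = LL 4 a b :=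
  funext fun t => (((hd3 a t).sub (hd3 b t)).div_const _).deriv

lemma log_gini (p q t : ℝ) : Real.log (gini p q (Real.exp t) 1) = LL 0 p q t := by
  have hx : (0:ℝ) < Real.exp t := Real.exp_pos t
  have h1 : ∀ r : ℝ, (Real.exp t) ^ r = Real.exp (r*t) := by
    intro r
    rw [Real.rpow_def_of_pos hx, Real.log_exp, mul_comm]
  have hP : (0:ℝ) < Real.exp (p*t) + 1 := Epos p t
  have hQ : (0:ℝ) < Real.exp (q*t) + 1 := Epos q t
  unfold gini
  rw [Real.one_rpow, Real.one_rpow, h1 p, h1 q,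
    Real.log_rpow (by positivity), Real.log_div hP.ne' hQ.ne']
  simp only [LL, H0]
  ring

lemma evalH2 (p : ℝ) : H2 p 0 = p^2/4 := by
  simp [H2, Real.exp_zero]; norm_num

lemma evalH4 (p : ℝ) : H4 p 0 = -(p^4)/8 := by
  simp [H4, Real.exp_zero]; norm_num; ring

lemma ll2 (p q : ℝ) (hpq : p ≠ q) : LL 2 p q 0 = (p+q)/4 := by
  have h' : p - q ≠ 0 := sub_ne_zero.mpr hpq
  show (H2 p 0 - H2 q 0) / (p - q) = (p+q)/4
  rw [evalH2, evalH2]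
  field_simp
  ring

lemma ll4 (p q : ℝ) (hpq : p ≠ q) : LL 4 p q 0 = -((p+q)*(p^2+q^2))/8 := by
  have h' : p - q ≠ 0 := sub_ne_zero.mpr hpq
  show (H4 p 0 - H4 q 0) / (p - q) = _
  rw [evalH4, evalH4]
  field_simp
  ring

theorem gini_equality_characterization (a b c d : ℝ) (hab : a ≠ b) (hcd : c ≠ d) :
    (∀ x y : ℝ, 0 < x → 0 < y → gini a b x y = gini c d x y) ↔
      (a + b = 0 ∧ c + d = 0) ∨ ({a, b} : Set ℝ) = {c, d} := by
  constructor
  · intro h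
    have hfun : LL 0 a b = LL 0 c d := by
      funext t
      rw [← log_gini a b t, ← log_gini c d t, h (Real.exp t) 1 (Real.exp_pos t) one_pos]
    have h2eq : LL 2 a b 0 = LL 2 c d 0 := by
      have h' : deriv (deriv (LL 0 a b)) 0 = deriv (deriv (LL 0 c d)) 0 := by rw [hfun]
      rwa [derivLL0, derivLL1, derivLL0, derivLL1] at h'
    have h4eq : LL 4 a b 0 = LL 4 c d 0 := by
      have h' : deriv (deriv (deriv (deriv (LL 0 a b)))) 0
          = deriv (deriv (deriv (deriv (LL 0 c d)))) 0 := by rw [hfun]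
      rwa [derivLL0, derivLL1, derivLL2, derivLL3,
           derivLL0, derivLL1, derivLL2, derivLL3] at h'
    rw [ll2 a b hab, ll2 c d hcd] at h2eq
    rw [ll4 a b hab, ll4 c d hcd] at h4eq
    have hsum : a + b = c + d := by linarith
    by_cases hs0 : a + b = 0
    · exact Or.inl ⟨hs0, by linarith⟩
    · right
      have hsq : a^2 + b^2 = c^2 + d^2 := by
        have h4' : (a+b)*(a^2+b^2) = (c+d)*(c^2+d^2) := by linarith
        rw [← hsum] at h4'
        exact mul_left_cancel₀ hs0 h4'
      have hprod : a*b = c*d := by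
        linear_combination (a+b+c+d)/2 * hsum - 1/2 * hsq
      have ha' : (a-c)*(a-d) = 0 := by linear_combination a*hsum - hprod
      have hb' : (b-c)*(b-d) = 0 := by linear_combination b*hsum - hprod
      rcases mul_eq_zero.mp ha' with h1|h1 <;> rcases mul_eq_zero.mp hb' with h2|h2
      · exact absurd (by linarith : a = b) hab
      · exact Set.pair_eq_pair_iff.mpr (Or.inl ⟨by linarith, by linarith⟩)
      · exact Set.pair_eq_pair_iff.mpr (Or.inr ⟨by linarith, by linarith⟩)
      · exact absurd (by linarith : a = b) hab
  · rintro (⟨h1, h2⟩ | hset) x y hx hy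
    · have hb : b = -a := by linarith
      have hd : d = -c := by linarith
      have ha0 : a ≠ 0 := by rintro rfl; exact hab (by linarith)
      have hc0 : c ≠ 0 := by rintro rfl; exact hcd (by linarith)
      rw [hb, hd, gini_geom a x y ha0 hx hy, gini_geom c x y hc0 hx hy]
    · rcases Set.pair_eq_pair_iff.mp hset with ⟨h1, h2⟩ | ⟨h1, h2⟩
      · rw [h1, h2]
      · rw [h1, h2]
        exact gini_symm d c x y hx hy
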